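/- Let N ≥ 5 and let v_{ij} = |ξ_{ij}⟩⟨ξ_{ij}| ∈ M_N(ℂ) be the flat magic unitary from the magic basis ξ above. Then for any indices, the product v_{i_1 j_1} v_{i_2 j_2} ⋯ v_{i_m j_m} = 0 if and only if there exists some 1 ≤ n ≤ m−1 with (i_n = i_{n+1} and j_n ≠ j_{n+1}) or (j_n = j_{n+1} and i_n ≠ i_{n+1}). -/

import Mathlib

open Complex Matrix Finset

/-- `ω = exp(2πi/N)`. -/
noncomputable def omegaN (N : ℕ) : ℂ := Complex.exp (2 * Real.pi * Complex.I / N)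

/-- The vector `ξ_{ij} ∈ ℂ^N`: coordinate `p` (for `p = 1, …, N`, encoded as `p : Fin N`
with value `p+1`) is `ω^{1-j}/√N` if `p = 1`, `ω^{i-1}/√N` if `p = N`,
and `ω^{p(i-j)}/√N` otherwise. -/
noncomputable def xiVec (N : ℕ) (i j : ℤ) : EuclideanSpace ℂ (Fin N) :=
  WithLp.toLp 2 fun p : Fin N =>
    if (p : ℕ) = 0 then omegaN N ^ (1 - j) / (Real.sqrt N : ℂ)
    else if (p : ℕ) = N - 1 then omegaN N ^ (i - 1) / (Real.sqrt N : ℂ)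
    else omegaN N ^ ((((p : ℕ) : ℤ) + 1) * (i - j)) / (Real.sqrt N : ℂ)

/-- The matrix of the rank-one projection `|ξ_{ij}⟩⟨ξ_{ij}|` onto the span of `ξ_{ij}`:
`(v_{ij})_{pq} = ξ_{ij}(p) ⋅ conj (ξ_{ij}(q))`, so that `v_{ij} x = ⟨ξ_{ij}, x⟩ ξ_{ij}`. -/
noncomputable def flatV (N : ℕ) (i j : Fin N) : Matrix (Fin N) (Fin N) ℂ :=
  Matrix.of fun p q =>
    xiVec N (((i : ℕ) : ℤ) + 1) (((j : ℕ) : ℤ) + 1) p *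
      (starRingEnd ℂ) (xiVec N (((i : ℕ) : ℤ) + 1) (((j : ℕ) : ℤ) + 1) q)


lemma omegaN_ne_zero (N : ℕ) : omegaN N ≠ 0 := Complex.exp_ne_zero _

lemma isPrimitiveRoot_omegaN {N : ℕ} (hN : N ≠ 0) : IsPrimitiveRoot (omegaN N) N := by
  simpa [omegaN] using Complex.isPrimitiveRoot_exp N hN

lemma omegaN_zpow_eq_one_iff {N : ℕ} (hN : N ≠ 0) (z : ℤ) :
    omegaN N ^ z = 1 ↔ (N : ℤ) ∣ z :=
  (isPrimitiveRoot_omegaN hN).zpow_eq_one_iff_dvd z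

lemma abs_omegaN (N : ℕ) : ‖omegaN N‖ = 1 := by
  have : omegaN N = Complex.exp (((2 * Real.pi / N : ℝ) : ℂ) * Complex.I) := by
    unfold omegaN; push_cast; ring_nf
  rw [this, Complex.norm_exp]
  simp

lemma conj_omegaN_zpow (N : ℕ) (z : ℤ) :
    (starRingEnd ℂ) (omegaN N ^ z) = omegaN N ^ (-z) := by
  rw [map_zpow₀]
  have : (starRingEnd ℂ) (omegaN N) = (omegaN N)⁻¹ := by
    rw [← Complex.inv_eq_conj (abs_omegaN N)]
  rw [this, _root_.inv_zpow, ← _root_.zpow_neg]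

lemma re_omegaN_zpow_ge (N : ℕ) (z : ℤ) : -1 ≤ (omegaN N ^ z).re := by
  have h1 : ‖omegaN N ^ z‖ = 1 := by
    rw [norm_zpow, abs_omegaN, _root_.one_zpow]
  have := Complex.abs_re_le_norm (omegaN N ^ z)
  rw [h1] at this
  have := abs_le.mp this
  linarith [this.1]

lemma conj_term (N : ℕ) (hN : 0 < N) (s t : ℤ) :
    (starRingEnd ℂ) (omegaN N ^ s / (Real.sqrt N : ℂ)) * (omegaN N ^ t / (Real.sqrt N : ℂ))
      = omegaN N ^ (t - s) / N := by
  rw [map_div₀, conj_omegaN_zpow, Complex.conj_ofReal, div_mul_div_comm,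
    ← zpow_add₀ (omegaN_ne_zero N), ← Complex.ofReal_mul,
    Real.mul_self_sqrt (by positivity)]
  push_cast
  ring_nf



/-- Pointwise expansion of one summand of the inner product. -/
lemma term_expand (N : ℕ) (hN : 5 ≤ N) (i j k l : Fin N) (p : Fin N) :
    (starRingEnd ℂ) (xiVec N (((i:ℕ):ℤ)+1) (((j:ℕ):ℤ)+1) p)
        * xiVec N (((k:ℕ):ℤ)+1) (((l:ℕ):ℤ)+1) p
      = omegaN N ^ ((((p:ℕ):ℤ)+1) * ((((k:ℕ):ℤ) - ((i:ℕ):ℤ)) - (((l:ℕ):ℤ) - ((j:ℕ):ℤ)))) / N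
        + (if (p:ℕ) = 0 then
            (omegaN N ^ (-(((l:ℕ):ℤ) - ((j:ℕ):ℤ)))
              - omegaN N ^ ((((k:ℕ):ℤ) - ((i:ℕ):ℤ)) - (((l:ℕ):ℤ) - ((j:ℕ):ℤ)))) / N
          else 0)
        + (if (p:ℕ) = N - 1 then
            (omegaN N ^ (((k:ℕ):ℤ) - ((i:ℕ):ℤ)) - 1) / N
          else 0) := by
  have hN0 : 0 < N := by omega
  by_cases h0 : (p:ℕ) = 0
  · have hne : (p:ℕ) ≠ N - 1 := by omega
    simp only [xiVec, PiLp.toLp_apply, if_pos h0, if_neg hne]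
    rw [conj_term N hN0]
    have e1 : (1 - (((l:ℕ):ℤ)+1)) - (1 - (((j:ℕ):ℤ)+1)) = -(((l:ℕ):ℤ) - ((j:ℕ):ℤ)) := by ring
    have e2 : (((p:ℕ):ℤ)) + 1 = 1 := by omega
    rw [e1, e2, one_mul]
    ring
  · by_cases h1 : (p:ℕ) = N - 1
    · simp only [xiVec, PiLp.toLp_apply, if_neg h0, if_pos h1]
      rw [conj_term N hN0]
      have e1 : ((((k:ℕ):ℤ)+1) - 1) - ((((i:ℕ):ℤ)+1) - 1) = ((k:ℕ):ℤ) - ((i:ℕ):ℤ) := by ring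
      have e2 : omegaN N
          ^ (((((p:ℕ):ℤ))+1) * ((((k:ℕ):ℤ) - ((i:ℕ):ℤ)) - (((l:ℕ):ℤ) - ((j:ℕ):ℤ)))) = 1 := by
        rw [omegaN_zpow_eq_one_iff (by omega)]
        have e3 : (((p:ℕ):ℤ)) + 1 = (N:ℤ) := by omega
        rw [e3]
        exact Dvd.intro _ rfl
      rw [e1, e2]
      ring
    · simp only [xiVec, PiLp.toLp_apply, if_neg h0, if_neg h1]
      rw [conj_term N hN0]
      have e1 : ((((p:ℕ):ℤ))+1) * ((((k:ℕ):ℤ)+1) - ((((l:ℕ):ℤ))+1))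
          - ((((p:ℕ):ℤ))+1) * ((((i:ℕ):ℤ)+1) - ((((j:ℕ):ℤ))+1))
          = ((((p:ℕ):ℤ))+1) * ((((k:ℕ):ℤ) - ((i:ℕ):ℤ)) - (((l:ℕ):ℤ) - ((j:ℕ):ℤ))) := by ring
      rw [e1]
      ring

lemma sum_ind (N : ℕ) (t : ℕ) (ht : t < N) (c : ℂ) :
    (∑ p : Fin N, if (p:ℕ) = t then c else 0) = c := by
  rw [Finset.sum_eq_single (⟨t, ht⟩ : Fin N)]
  · simp
  · intro q _ hq
    rw [if_neg]
    simpa [Fin.ext_iff] using hq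
  · simp

lemma ipc_xi_eq (N : ℕ) (hN : 5 ≤ N) (i j k l : Fin N) :
    (∑ p : Fin N, (starRingEnd ℂ) (xiVec N (((i:ℕ):ℤ)+1) (((j:ℕ):ℤ)+1) p)
        * xiVec N (((k:ℕ):ℤ)+1) (((l:ℕ):ℤ)+1) p)
      = ((∑ p : Fin N,
            (omegaN N ^ ((((k:ℕ):ℤ) - ((i:ℕ):ℤ)) - (((l:ℕ):ℤ) - ((j:ℕ):ℤ)))) ^ (p:ℕ))
              * omegaN N ^ ((((k:ℕ):ℤ) - ((i:ℕ):ℤ)) - (((l:ℕ):ℤ) - ((j:ℕ):ℤ)))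
          + omegaN N ^ (-(((l:ℕ):ℤ) - ((j:ℕ):ℤ)))
          - omegaN N ^ ((((k:ℕ):ℤ) - ((i:ℕ):ℤ)) - (((l:ℕ):ℤ) - ((j:ℕ):ℤ)))
          + omegaN N ^ (((k:ℕ):ℤ) - ((i:ℕ):ℤ)) - 1) / N := by
  set d : ℤ := (((k:ℕ):ℤ) - ((i:ℕ):ℤ)) - (((l:ℕ):ℤ) - ((j:ℕ):ℤ)) with hd
  rw [Finset.sum_congr rfl (fun p _ => term_expand N hN i j k l p)]
  rw [Finset.sum_add_distrib, Finset.sum_add_distrib,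
    sum_ind N 0 (by omega), sum_ind N (N-1) (by omega)]
  have e1 : ∀ p : Fin N, omegaN N ^ ((((p:ℕ):ℤ)+1) * d) / (N:ℂ)
      = (omegaN N ^ d) ^ (p:ℕ) * omegaN N ^ d / N := by
    intro p
    rw [show ((((p:ℕ):ℤ))+1) * d = d * ((p:ℕ):ℤ) + d by ring,
      zpow_add₀ (omegaN_ne_zero N), _root_.zpow_mul, zpow_natCast]
  rw [Finset.sum_congr rfl (fun p _ => e1 p), ← Finset.sum_div, ← Finset.sum_mul]
  ring

lemma ipc_xi_eq_zero_iff (N : ℕ) (hN : 5 ≤ N) (i j k l : Fin N) :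
    (∑ p : Fin N, (starRingEnd ℂ) (xiVec N (((i:ℕ):ℤ)+1) (((j:ℕ):ℤ)+1) p)
        * xiVec N (((k:ℕ):ℤ)+1) (((l:ℕ):ℤ)+1) p) = 0
      ↔ ((i = k ∧ j ≠ l) ∨ (j = l ∧ i ≠ k)) := by
  have hN0 : N ≠ 0 := by omega
  have hNz : (N:ℂ) ≠ 0 := by exact_mod_cast hN0
  rw [ipc_xi_eq N hN i j k l]
  set a : ℤ := ((k:ℕ):ℤ) - ((i:ℕ):ℤ) with ha
  set b : ℤ := ((l:ℕ):ℤ) - ((j:ℕ):ℤ) with hb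
  have hka := k.is_lt; have hia := i.is_lt; have hla := l.is_lt; have hja := j.is_lt
  have hsmalla : (N:ℤ) ∣ a ↔ a = 0 := by
    constructor
    · intro h
      exact Int.eq_zero_of_abs_lt_dvd h (by rw [abs_lt]; constructor <;> omega)
    · intro h; rw [h]; exact dvd_zero _
  have hsmallb : (N:ℤ) ∣ b ↔ b = 0 := by
    constructor
    · intro h
      exact Int.eq_zero_of_abs_lt_dvd h (by rw [abs_lt]; constructor <;> omega)
    · intro h; rw [h]; exact dvd_zero _
  have hik : i = k ↔ a = 0 := by rw [Fin.ext_iff]; omega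
  have hjl : j = l ↔ b = 0 := by rw [Fin.ext_iff]; omega
  by_cases hdvd : (N:ℤ) ∣ (a - b)
  · -- ω^(a-b) = 1, geometric sum = N, expression nonzero, condition false
    have hd1 : omegaN N ^ (a - b) = 1 := (omegaN_zpow_eq_one_iff hN0 _).2 hdvd
    rw [hd1]
    have hsum : (∑ p : Fin N, (1:ℂ) ^ (p:ℕ)) = N := by simp
    rw [hsum, mul_one]
    have hnum : ((N:ℂ) + omegaN N ^ (-b) - 1 + omegaN N ^ a - 1) ≠ 0 := by
      intro h
      have hre := congrArg Complex.re h
      simp only [Complex.add_re, Complex.sub_re, Complex.natCast_re, Complex.one_re,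
        Complex.zero_re] at hre
      have h1 := re_omegaN_zpow_ge N (-b)
      have h2 := re_omegaN_zpow_ge N a
      have : (5:ℝ) ≤ (N:ℝ) := by exact_mod_cast hN
      linarith
    constructor
    · intro h
      rcases div_eq_zero_iff.mp h with h' | h'
      · exact absurd h' hnum
      · exact absurd h' hNz
    · rintro (⟨hik', hjl'⟩ | ⟨hjl', hik'⟩)
      · rw [hik] at hik'
        rw [hik'] at hdvd
        simp only [zero_sub, dvd_neg] at hdvd
        exact absurd (hjl.mpr (hsmallb.mp hdvd)) hjl'
      · rw [hjl] at hjl'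
        rw [hjl'] at hdvd
        simp only [sub_zero] at hdvd
        exact absurd (hik.mpr (hsmalla.mp hdvd)) hik'
  · -- geometric sum vanishes
    have hx1 : omegaN N ^ (a - b) ≠ 1 := fun h => hdvd ((omegaN_zpow_eq_one_iff hN0 _).1 h)
    have hgeom : (∑ p : Fin N, (omegaN N ^ (a - b)) ^ (p:ℕ)) = 0 := by
      rw [Fin.sum_univ_eq_sum_range (fun q => (omegaN N ^ (a - b)) ^ q) N, geom_sum_eq hx1]
      have : (omegaN N ^ (a - b)) ^ N = 1 := by
        rw [← zpow_natCast, ← _root_.zpow_mul, omegaN_zpow_eq_one_iff hN0]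
        exact Dvd.intro_left _ rfl
      rw [this, sub_self, zero_div]
    rw [hgeom, zero_mul, zero_add]
    have hfact : omegaN N ^ (-b) - omegaN N ^ (a - b) + omegaN N ^ a - 1
        = omegaN N ^ (-b) * (omegaN N ^ b - 1) * (omegaN N ^ a - 1) := by
      have h1 : omegaN N ^ (-b) * omegaN N ^ b = 1 := by
        rw [← zpow_add₀ (omegaN_ne_zero N)]; simp
      have h2 : omegaN N ^ (-b) * omegaN N ^ a = omegaN N ^ (a - b) := by
        rw [← zpow_add₀ (omegaN_ne_zero N)]; ring_nf
      have expand : omegaN N ^ (-b) * (omegaN N ^ b - 1) * (omegaN N ^ a - 1)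
          = (omegaN N ^ (-b) * omegaN N ^ b) * omegaN N ^ a
            - omegaN N ^ (-b) * omegaN N ^ b - omegaN N ^ (-b) * omegaN N ^ a
            + omegaN N ^ (-b) := by ring
      rw [expand, h1, h2]
      ring
    rw [hfact, div_eq_zero_iff]
    simp only [hNz, or_false, mul_eq_zero, zpow_ne_zero _ (omegaN_ne_zero N), false_or]
    rw [sub_eq_zero, sub_eq_zero]
    rw [omegaN_zpow_eq_one_iff hN0, omegaN_zpow_eq_one_iff hN0, hsmallb, hsmalla]
    have hab : ¬(a = 0 ∧ b = 0) := fun ⟨h1, h2⟩ => hdvd (by rw [h1, h2]; simp)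
    rw [hik, hjl]
    tauto


noncomputable def outerM (N : ℕ) (x y : EuclideanSpace ℂ (Fin N)) :
    Matrix (Fin N) (Fin N) ℂ :=
  Matrix.of fun p q => x p * (starRingEnd ℂ) (y q)

noncomputable def ipc {N : ℕ} (x y : EuclideanSpace ℂ (Fin N)) : ℂ :=
  ∑ r, (starRingEnd ℂ) (x r) * y r

lemma outer_mul_outer {N : ℕ} (x y z w : EuclideanSpace ℂ (Fin N)) :
    outerM N x y * outerM N z w = ipc y z • outerM N x w := by
  ext p q
  simp only [Matrix.mul_apply, outerM, ipc, Matrix.smul_apply, Matrix.of_apply,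
    smul_eq_mul, Finset.sum_mul]
  apply Finset.sum_congr rfl
  intro r _
  ring

lemma prod_outer {N : ℕ} (m : ℕ) (v : Fin (m+1) → EuclideanSpace ℂ (Fin N)) :
    (List.ofFn fun n : Fin (m+1) => outerM N (v n) (v n)).prod
      = (∏ n : Fin m, ipc (v n.castSucc) (v n.succ)) • outerM N (v 0) (v (Fin.last m)) := by
  induction m with
  | zero => simp [List.ofFn_succ]
  | succ m ih =>
    rw [List.ofFn_succ, List.prod_cons, ih (fun n => v n.succ), mul_smul_comm,
      outer_mul_outer, smul_smul, Fin.prod_univ_succ]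
    simp only [Fin.succ_castSucc, Fin.succ_last, Fin.castSucc_zero, Fin.succ_zero_eq_one]
    rw [mul_comm]


lemma xiVec_apply_ne_zero (N : ℕ) (hN : 0 < N) (I J : ℤ) (p : Fin N) :
    xiVec N I J p ≠ 0 := by
  have hs : ((Real.sqrt N : ℝ) : ℂ) ≠ 0 := by
    rw [Complex.ofReal_ne_zero]
    positivity
  unfold xiVec
  rw [PiLp.toLp_apply]
  split_ifs <;> exact div_ne_zero (zpow_ne_zero _ (omegaN_ne_zero N)) hs

lemma outerM_xi_ne_zero (N : ℕ) (hN : 5 ≤ N) (I J K L : ℤ) :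
    outerM N (xiVec N I J) (xiVec N K L) ≠ 0 := by
  intro h
  have hN0 : 0 < N := by omega
  have h0 : outerM N (xiVec N I J) (xiVec N K L) ⟨0, hN0⟩ ⟨0, hN0⟩ = 0 := by rw [h]; rfl
  have hc : (starRingEnd ℂ) (xiVec N K L ⟨0, hN0⟩) ≠ 0 := by
    simpa using xiVec_apply_ne_zero N hN0 K L ⟨0, hN0⟩
  exact mul_ne_zero (xiVec_apply_ne_zero N hN0 I J ⟨0, hN0⟩) hc h0

theorem flatV_free_orbitals (N : ℕ) (hN : 5 ≤ N) (m : ℕ) (i j : Fin m → Fin N) :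
    (List.ofFn fun n : Fin m => flatV N (i n) (j n)).prod = 0 ↔
      ∃ n : ℕ, ∃ hn : n + 1 < m,
        (i ⟨n, Nat.lt_of_succ_lt hn⟩ = i ⟨n + 1, hn⟩ ∧
            j ⟨n, Nat.lt_of_succ_lt hn⟩ ≠ j ⟨n + 1, hn⟩) ∨
        (j ⟨n, Nat.lt_of_succ_lt hn⟩ = j ⟨n + 1, hn⟩ ∧
            i ⟨n, Nat.lt_of_succ_lt hn⟩ ≠ i ⟨n + 1, hn⟩) := by
  have hN0 : 0 < N := by omega
  cases m with
  | zero =>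
    simp only [List.ofFn_zero, List.prod_nil]
    constructor
    · intro h
      have h1 : (1 : Matrix (Fin N) (Fin N) ℂ) ⟨0, hN0⟩ ⟨0, hN0⟩ = 1 :=
        Matrix.one_apply_eq _
      rw [h] at h1
      simp at h1
    · rintro ⟨n, hn, -⟩
      omega
  | succ m =>
    set v : Fin (m+1) → EuclideanSpace ℂ (Fin N) :=
      fun n => xiVec N (((i n : ℕ) : ℤ) + 1) (((j n : ℕ) : ℤ) + 1) with hv
    have hfl : (List.ofFn fun n : Fin (m+1) => flatV N (i n) (j n))
        = List.ofFn fun n => outerM N (v n) (v n) := by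
      congr 1
    rw [hfl, prod_outer, smul_eq_zero]
    have houter : outerM N (v 0) (v (Fin.last m)) ≠ 0 := outerM_xi_ne_zero N hN _ _ _ _
    simp only [houter, or_false]
    rw [Finset.prod_eq_zero_iff]
    have key : ∀ n : Fin m, (ipc (v n.castSucc) (v n.succ) = 0)
        ↔ ((i n.castSucc = i n.succ ∧ j n.castSucc ≠ j n.succ)
            ∨ (j n.castSucc = j n.succ ∧ i n.castSucc ≠ i n.succ)) := fun n =>
      ipc_xi_eq_zero_iff N hN _ _ _ _
    constructor
    · rintro ⟨n, -, hn⟩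
      exact ⟨(n : ℕ), by omega, (key n).mp hn⟩
    · rintro ⟨n, hn, h⟩
      exact ⟨⟨n, by omega⟩, Finset.mem_univ _, (key ⟨n, by omega⟩).mpr h⟩
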